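/- For every θ with 0 < θ < π/2, the matrix subspace S_1 = span{A'_1,…,A'_8} ⊆ M_4(ℂ) is unextendible: if ψ, φ ∈ ℂ⁴ satisfy tr(A'_k · ψφ†) = 0 for all k = 1,…,8, then ψ = 0 or φ = 0. Equivalently, no nonzero rank-one matrix is Hilbert–Schmidt orthogonal to all of A'_1,…,A'_8. -/

import Mathlib

open Matrix

lemma trace_std_vecMulVec (i j : Fin 4) (ψ φ : Fin 4 → ℂ) :
    (single i j 1 * vecMulVec ψ (star φ)).trace = ψ j * (starRingEnd ℂ) (φ i) := by
  simp [Matrix.trace, Matrix.diag, Matrix.mul_apply, Matrix.single, ite_and,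
    Finset.sum_ite_eq, Finset.sum_ite_eq', Matrix.vecMulVec_apply]

/-- The eight basis matrices `A'_1, …, A'_8` of the subspace `S_1 ⊆ M_4(ℂ)`,
where `|a⟩⟨b| = single a b 1`. -/
noncomputable def Amat' (θ : ℝ) : Fin 8 → Matrix (Fin 4) (Fin 4) ℂ :=
  ![single 0 0 1 + single 1 1 1,
    single 2 2 1 + single 3 3 1,
    single 2 0 1 + single 0 2 1,
    single 3 0 1 + single 0 3 1,
    single 1 3 1 - single 3 1 1,
    (Real.cos θ : ℂ) • single 0 1 1 + (Real.sin θ : ℂ) • single 2 3 1 -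
      single 1 2 1,
    (Real.cos θ : ℂ) • single 1 0 1 + (Real.sin θ : ℂ) • single 3 2 1 -
      single 2 1 1,
    (Real.sin θ : ℂ) • single 0 1 1 - (Real.cos θ : ℂ) • single 2 3 1 +
      (Real.sin θ : ℂ) • single 1 0 1 - (Real.cos θ : ℂ) • single 3 2 1]

/-- for `0 < θ < π/2`, the subspace `S_1 = span {A'_1, …, A'_8}` is unextendible:
no nonzero rank-one matrix `ψφ†` satisfies `tr(A'_k · ψφ†) = 0` for all `k`. -/
theorem stmt_5 (θ : ℝ) (hθ0 : 0 < θ) (hθ1 : θ < Real.pi / 2) (ψ φ : Fin 4 → ℂ)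
    (h : ∀ k, (Amat' θ k * vecMulVec ψ (star φ)).trace = 0) :
    ψ = 0 ∨ φ = 0 := by
  have hπ : 0 < Real.pi := Real.pi_pos
  have hs : (Real.sin θ : ℂ) ≠ 0 := by
    exact_mod_cast Complex.ofReal_ne_zero.mpr
      (ne_of_gt (Real.sin_pos_of_pos_of_lt_pi hθ0 (by linarith)))
  have hc : (Real.cos θ : ℂ) ≠ 0 := by
    exact_mod_cast Complex.ofReal_ne_zero.mpr
      (ne_of_gt (Real.cos_pos_of_mem_Ioo ⟨by linarith, hθ1⟩))
  have e1 : ((single 0 0 1 + single 1 1 1 : Matrix (Fin 4) (Fin 4) ℂ)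
      * vecMulVec ψ (star φ)).trace = 0 := h 0
  have e2 : ((single 2 2 1 + single 3 3 1 : Matrix (Fin 4) (Fin 4) ℂ)
      * vecMulVec ψ (star φ)).trace = 0 := h 1
  have e3 : ((single 2 0 1 + single 0 2 1 : Matrix (Fin 4) (Fin 4) ℂ)
      * vecMulVec ψ (star φ)).trace = 0 := h 2
  have e4 : ((single 3 0 1 + single 0 3 1 : Matrix (Fin 4) (Fin 4) ℂ)
      * vecMulVec ψ (star φ)).trace = 0 := h 3
  have e5 : ((single 1 3 1 - single 3 1 1 : Matrix (Fin 4) (Fin 4) ℂ)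
      * vecMulVec ψ (star φ)).trace = 0 := h 4
  have e6 : (((Real.cos θ : ℂ) • single 0 1 1 + (Real.sin θ : ℂ) • single 2 3 1 -
      single 1 2 1) * vecMulVec ψ (star φ)).trace = 0 := h 5
  have e7 : (((Real.cos θ : ℂ) • single 1 0 1 + (Real.sin θ : ℂ) • single 3 2 1 -
      single 2 1 1) * vecMulVec ψ (star φ)).trace = 0 := h 6
  have e8 : (((Real.sin θ : ℂ) • single 0 1 1 - (Real.cos θ : ℂ) • single 2 3 1 +
      (Real.sin θ : ℂ) • single 1 0 1 - (Real.cos θ : ℂ) • single 3 2 1)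
      * vecMulVec ψ (star φ)).trace = 0 := h 7
  simp only [Matrix.add_mul, Matrix.sub_mul, Matrix.smul_mul, trace_add, trace_sub, trace_smul,
    trace_std_vecMulVec, smul_eq_mul] at e1 e2 e3 e4 e5 e6 e7 e8
  set s : ℂ := (Real.sin θ : ℂ) with hsdef
  set c : ℂ := (Real.cos θ : ℂ) with hcdef
  set b0 : ℂ := (starRingEnd ℂ) (φ 0) with hb0def
  set b1 : ℂ := (starRingEnd ℂ) (φ 1) with hb1def
  set b2 : ℂ := (starRingEnd ℂ) (φ 2) with hb2def
  set b3 : ℂ := (starRingEnd ℂ) (φ 3) with hb3def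
  have psizero : ψ 0 = 0 → ψ 1 = 0 → ψ 2 = 0 → ψ 3 = 0 → ψ = 0 := by
    intro h0 h1 h2 h3; funext i; fin_cases i <;> assumption
  have phizero : b0 = 0 → b1 = 0 → b2 = 0 → b3 = 0 → φ = 0 := by
    intro h0 h1 h2 h3; funext i; fin_cases i <;>
      [exact (map_eq_zero _).mp h0; exact (map_eq_zero _).mp h1;
       exact (map_eq_zero _).mp h2; exact (map_eq_zero _).mp h3]
  by_cases hx0 : ψ 0 = 0
  · by_cases hb0 : b0 = 0
    · by_cases hb1 : b1 = 0
      · -- x0 = 0, b0 = 0, b1 = 0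
        have t1 : ψ 1 * b3 = 0 := by linear_combination -e5 + ψ 3 * hb1
        have t2 : ψ 3 * b2 = 0 := by
          have : s * (ψ 3 * b2) = 0 := by linear_combination e6 - c * ψ 1 * hb0 + ψ 2 * hb1
          exact (mul_eq_zero.mp this).resolve_left hs
        have t3 : ψ 2 * b3 = 0 := by
          have : c * (ψ 2 * b3) = 0 := by
            linear_combination -e8 + s * ψ 1 * hb0 + s * ψ 0 * hb1 - c * t2
          exact (mul_eq_zero.mp this).resolve_left hc
        have t4 : ψ 1 * b2 = 0 := by
          have h7' : s * (ψ 2 * b3) - ψ 1 * b2 = 0 := by linear_combination e7 - c * b1 * hx0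
          linear_combination -h7' + s * t3
        by_cases hb2 : b2 = 0
        · by_cases hb3 : b3 = 0
          · exact Or.inr (phizero hb0 hb1 hb2 hb3)
          · left
            have k1 : ψ 1 = 0 := (mul_eq_zero.mp t1).resolve_right hb3
            have k2 : ψ 2 = 0 := (mul_eq_zero.mp t3).resolve_right hb3
            have k3 : ψ 3 = 0 := by
              have : ψ 3 * b3 = 0 := by linear_combination e2 - b2 * k2
              exact (mul_eq_zero.mp this).resolve_right hb3
            exact psizero hx0 k1 k2 k3
        · left
          have k1 : ψ 1 = 0 := (mul_eq_zero.mp t4).resolve_right hb2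
          have k3 : ψ 3 = 0 := (mul_eq_zero.mp t2).resolve_right hb2
          have k2 : ψ 2 = 0 := by
            have : ψ 2 * b2 = 0 := by linear_combination e2 - b3 * k3
            exact (mul_eq_zero.mp this).resolve_right hb2
          exact psizero hx0 k1 k2 k3
      · -- x0 = 0, b0 = 0, b1 ≠ 0
        left
        have k1 : ψ 1 = 0 := by
          have : ψ 1 * b1 = 0 := by linear_combination e1 - b0 * hx0
          exact (mul_eq_zero.mp this).resolve_right hb1
        have k3 : ψ 3 = 0 := by
          have : ψ 3 * b1 = 0 := by linear_combination e5 + b3 * k1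
          exact (mul_eq_zero.mp this).resolve_right hb1
        have k2 : ψ 2 = 0 := by
          have : ψ 2 * b1 = 0 := by linear_combination -e6 + c * b0 * k1 + s * b2 * k3
          exact (mul_eq_zero.mp this).resolve_right hb1
        exact psizero hx0 k1 k2 k3
    · -- x0 = 0, b0 ≠ 0
      left
      have k2 : ψ 2 = 0 := by
        have : ψ 2 * b0 = 0 := by linear_combination e3 - b2 * hx0
        exact (mul_eq_zero.mp this).resolve_right hb0
      have k3 : ψ 3 = 0 := by
        have : ψ 3 * b0 = 0 := by linear_combination e4 - b3 * hx0
        exact (mul_eq_zero.mp this).resolve_right hb0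
      have k1 : ψ 1 = 0 := by
        have : c * (ψ 1 * b0) = 0 := by linear_combination e6 - s * b2 * k3 + b1 * k2
        exact ((mul_eq_zero.mp ((mul_eq_zero.mp this).resolve_left hc))).resolve_right hb0
      exact psizero hx0 k1 k2 k3
  · by_cases hb0 : b0 = 0
    · -- x0 ≠ 0, b0 = 0
      right
      have k2 : b2 = 0 := by
        have : ψ 0 * b2 = 0 := by linear_combination e3 - ψ 2 * hb0
        exact (mul_eq_zero.mp this).resolve_left hx0
      have k3 : b3 = 0 := by
        have : ψ 0 * b3 = 0 := by linear_combination e4 - ψ 3 * hb0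
        exact (mul_eq_zero.mp this).resolve_left hx0
      have k1 : b1 = 0 := by
        have : c * (ψ 0 * b1) = 0 := by linear_combination e7 - s * ψ 2 * k3 + ψ 1 * k2
        exact ((mul_eq_zero.mp ((mul_eq_zero.mp this).resolve_left hc))).resolve_left hx0
      exact phizero hb0 k1 k2 k3
    · -- hard case: x0 ≠ 0, b0 ≠ 0. Derive contradiction.
      exfalso
      have hx1b1 : ψ 1 * b1 = -(ψ 0 * b0) := by linear_combination e1
      have hx1 : ψ 1 ≠ 0 := by
        intro hz
        exact mul_ne_zero hx0 hb0 (by linear_combination hx1b1 - b1 * hz)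
      have hb1 : b1 ≠ 0 := by
        intro hz
        exact mul_ne_zero hx0 hb0 (by linear_combination hx1b1 - ψ 1 * hz)
      have h23 : ψ 2 ^ 2 + ψ 3 ^ 2 = 0 := by
        have : b0 * (ψ 2 ^ 2 + ψ 3 ^ 2) = 0 := by
          linear_combination (-(ψ 0)) * e2 + ψ 2 * e3 + ψ 3 * e4
        exact (mul_eq_zero.mp this).resolve_left hb0
      by_cases hx3 : ψ 3 = 0
      · -- then ψ 2 = 0 and e6 gives c * ψ 1 * b0 = 0, contradiction
        have hx2 : ψ 2 = 0 := by
          have : ψ 2 ^ 2 = 0 := by linear_combination h23 - ψ 3 * hx3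
          exact pow_eq_zero_iff (n := 2) (by norm_num) |>.mp this
        have : c * (ψ 1 * b0) = 0 := by
          linear_combination e6 - s * b2 * hx3 + b1 * hx2
        exact (mul_ne_zero hc (mul_ne_zero hx1 hb0)) this
      · -- ψ 3 ≠ 0 : get ψ 1 ^ 2 = ψ 0 ^ 2, then ψ 2 = 0, then ψ 3 = 0
        have hsq : ψ 1 ^ 2 - ψ 0 ^ 2 = 0 := by
          have key : b0 * (ψ 3 * (ψ 1 ^ 2 - ψ 0 ^ 2)) = 0 := by
            linear_combination (ψ 1 ^ 2) * e4 + (ψ 0 * ψ 1) * e5 - (ψ 0 * ψ 3) * e1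
          exact ((mul_eq_zero.mp ((mul_eq_zero.mp key).resolve_left hb0))).resolve_left hx3
        have hx2 : ψ 2 = 0 := by
          have key2 : b0 * (2 * c * (ψ 1 * (ψ 2 * ψ 3))) = 0 := by
            linear_combination (ψ 0 * ψ 1) * e8 + (c * ψ 1 * ψ 3) * e3 + (c * ψ 1 * ψ 2) * e4
              - (s * ψ 0 ^ 2) * e1 - (s * ψ 0 * b0) * hsq
          have h1 := (mul_eq_zero.mp key2).resolve_left hb0
          have h2 := (mul_eq_zero.mp h1).resolve_left (mul_ne_zero two_ne_zero hc)
          have h3 := (mul_eq_zero.mp h2).resolve_left hx1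
          exact (mul_eq_zero.mp h3).resolve_right hx3
        have : ψ 3 ^ 2 = 0 := by linear_combination h23 - ψ 2 * hx2
        exact hx3 (pow_eq_zero_iff (n := 2) (by norm_num) |>.mp this)
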